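/- There exists a constant C₂ > 0 such that v(x) ≤ C₂ (1 + x^{1−γ}) for all x > 0. -/

import Mathlib

open Set Filter Topology

/-- Upper growth bound: a nonnegative concave classical solution of the isoelastic HJB
equation satisfies `v(x) ≤ C₂ (1 + x^(1−γ))` for some constant `C₂ > 0`. -/
theorem isoelastic_hjb_upper_growth_bound
    (α γ μ σ β : ℝ) (hα0 : 0 < α) (hα1 : α < 1) (hγ0 : 0 < γ) (hγ1 : γ < 1)
    (hμ : 0 < μ) (hσ : 0 < σ) (hβ : 0 < β)
    (v v' v'' : ℝ → ℝ)
    (hv'deriv : ∀ x > (0 : ℝ), HasDerivAt v (v' x) x)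
    (hv''deriv : ∀ x > (0 : ℝ), HasDerivAt v' (v'' x) x)
    (hv''cont : ContinuousOn v'' (Ioi 0))
    (hvnonneg : ∀ x > (0 : ℝ), 0 ≤ v x)
    (hconc : ConcaveOn ℝ (Ioi 0) v)
    (hv'pos : ∀ x > (0 : ℝ), 0 < v' x)
    (hHJB : ∀ x > (0 : ℝ), β * v x =
      (1 / 2) * σ ^ 2 * x ^ 2 * v'' x + (x ^ α - μ * x) * v' x
        + (γ / (1 - γ)) * (v' x) ^ ((γ - 1) / γ)) :
    ∃ C₂ > (0 : ℝ), ∀ x > (0 : ℝ), v x ≤ C₂ * (1 + x ^ (1 - γ)) := by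
  have h1γ : 0 < 1 - γ := by linarith
  -- v' is antitone on (0,∞)
  have hanti : ∀ a b : ℝ, 0 < a → a < b → v' b ≤ v' a := by
    intro a b ha hab
    have hb : 0 < b := ha.trans hab
    have h1 : v' b ≤ slope v a b :=
      hconc.le_slope_of_hasDerivAt (mem_Ioi.mpr ha) (mem_Ioi.mpr hb) hab (hv'deriv b hb)
    have h2 : slope v a b ≤ v' a :=
      hconc.slope_le_of_hasDerivAt (mem_Ioi.mpr ha) (mem_Ioi.mpr hb) hab (hv'deriv a ha)
    linarith
  -- hence v'' ≤ 0 on (0,∞)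
  have hv''nonpos : ∀ x > (0 : ℝ), v'' x ≤ 0 := by
    intro x hx
    have hd : HasDerivWithinAt v' (v'' x) (Ioi x) x := (hv''deriv x hx).hasDerivWithinAt
    rw [hasDerivWithinAt_iff_tendsto_slope] at hd
    have hs : Ioi x \ {x} = Ioi x := by
      apply diff_singleton_eq_self; simp
    rw [hs] at hd
    refine le_of_tendsto hd ?_
    filter_upwards [self_mem_nhdsWithin] with y hy
    have hyx : x < y := hy
    have h1 : v' y ≤ v' x := hanti x y hx hyx
    rw [slope_def_field]
    apply div_nonpos_of_nonpos_of_nonneg <;> linarith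
  -- the tangent-line bound `x v'(x) ≤ 2 v(x)`
  have hv'le : ∀ x > (0 : ℝ), x * v' x ≤ 2 * v x := by
    intro x hx
    have hhalf : (0 : ℝ) < x / 2 := by linarith
    have h2 : v' x ≤ slope v (x / 2) x :=
      hconc.le_slope_of_hasDerivAt (mem_Ioi.mpr hhalf) (mem_Ioi.mpr hx) (by linarith)
        (hv'deriv x hx)
    rw [slope_def_field] at h2
    have hnn := hvnonneg (x / 2) hhalf
    have h3 : v' x * (x - x / 2) ≤ v x - v (x / 2) := by
      have h4 := (le_div_iff₀ (by linarith : (0:ℝ) < x - x/2)).mp h2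
      linarith
    nlinarith
  -- v is strictly monotone on (0,∞)
  have hcont : ContinuousOn v (Ioi 0) := fun x hx =>
    ((hv'deriv x hx).continuousAt).continuousWithinAt
  have hmono : StrictMonoOn v (Ioi 0) := by
    apply strictMonoOn_of_deriv_pos (convex_Ioi 0) hcont
    intro x hx
    rw [interior_Ioi] at hx
    rw [(hv'deriv x hx).deriv]
    exact hv'pos x hx
  -- constants
  set c := γ / (1 - γ) with hcdef
  have hc0 : 0 < c := div_pos hγ0 h1γ
  clear_value c
  set θ := (1 - γ) / γ with hθdef
  have hθ0 : 0 < θ := div_pos h1γ hγ0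
  clear_value θ
  have hdθ : (γ - 1) / γ = -θ := by rw [hθdef]; ring
  set q := 1 / (1 - γ) with hqdef
  have hq1 : (1 : ℝ) ≤ q := by rw [hqdef, le_div_iff₀ h1γ]; linarith
  have hq0 : (0 : ℝ) < q := lt_of_lt_of_le one_pos hq1
  clear_value q
  have hqθ : q - 1 = 1 / θ := by
    rw [hqdef, hθdef, one_div_div]
    field_simp
    ring
  set K := (2 * c / β) ^ (1 / θ) with hKdef
  have hK0 : 0 < K := Real.rpow_pos_of_pos (div_pos (by linarith) hβ) _
  clear_value K
  -- threshold
  set x₀ := max 1 ((4 / β) ^ (1 / (1 - α))) with hx₀def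
  have hx₀1 : (1 : ℝ) ≤ x₀ := le_max_left _ _
  have hx₀pos : (0 : ℝ) < x₀ := lt_of_lt_of_le one_pos hx₀1
  clear_value x₀
  have hx₀prop : ∀ y : ℝ, x₀ ≤ y → y ^ (α - 1) ≤ β / 4 := by
    intro y hy
    have hy0 : 0 < y := lt_of_lt_of_le hx₀pos hy
    have h4β : (0 : ℝ) < 4 / β := by positivity
    have h1 : 4 / β ≤ y ^ (1 - α) := by
      calc 4 / β = ((4 / β) ^ (1 / (1 - α))) ^ (1 - α) := by
            rw [← Real.rpow_mul h4β.le, one_div_mul_cancel (by linarith : (1:ℝ) - α ≠ 0),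
              Real.rpow_one]
        _ ≤ y ^ (1 - α) := by
            apply Real.rpow_le_rpow (Real.rpow_nonneg h4β.le _) _ (by linarith)
            have hy' : max 1 ((4 / β) ^ (1 / (1 - α))) ≤ y := hx₀def ▸ hy
            exact le_trans (le_max_right _ _) hy'
    have h2 : y ^ (α - 1) = (y ^ (1 - α))⁻¹ := by
      rw [← Real.rpow_neg hy0.le]
      norm_num
    have h3 : β / 4 = (4 / β)⁻¹ := by
      rw [inv_div]
    rw [h2, h3]
    exact inv_anti₀ h4β h1
  -- main estimate
  have hmain : ∀ y : ℝ, x₀ ≤ y → v' y * v y ^ (1 / θ) ≤ K := by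
    intro y hy
    have hy0 : 0 < y := lt_of_lt_of_le hx₀pos hy
    have hp0 : 0 < v' y := hv'pos y hy0
    have hvy0 : 0 ≤ v y := hvnonneg y hy0
    have hHJBy := hHJB y hy0
    rw [hdθ] at hHJBy
    have hT1 : (1 / 2) * σ ^ 2 * y ^ 2 * v'' y ≤ 0 :=
      mul_nonpos_of_nonneg_of_nonpos (by positivity) (hv''nonpos y hy0)
    have hT2 : (y ^ α - μ * y) * v' y ≤ (β / 2) * v y := by
      have e1 : y ^ α = y ^ (α - 1) * y := by
        rw [← Real.rpow_add_one hy0.ne' (α - 1)]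
        norm_num
      have h2v : y * v' y ≤ 2 * v y := hv'le y hy0
      have hya : (0 : ℝ) ≤ y ^ (α - 1) := Real.rpow_nonneg hy0.le _
      have hμy : 0 < μ * y * v' y := by positivity
      calc (y ^ α - μ * y) * v' y ≤ y ^ α * v' y := by nlinarith
        _ = y ^ (α - 1) * (y * v' y) := by rw [e1]; ring
        _ ≤ y ^ (α - 1) * (2 * v y) := mul_le_mul_of_nonneg_left h2v hya
        _ ≤ (β / 4) * (2 * v y) :=
            mul_le_mul_of_nonneg_right (hx₀prop y hy) (by linarith)
        _ = (β / 2) * v y := by ring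
    have hkey : (β / 2) * v y ≤ c * v' y ^ (-θ) := by linarith
    rcases eq_or_lt_of_le hvy0 with h0 | hvpos
    · rw [← h0, Real.zero_rpow (one_div_pos.mpr hθ0).ne', mul_zero]
      exact hK0.le
    · have hpθ : 0 < v' y ^ θ := Real.rpow_pos_of_pos hp0 θ
      have hstep : v' y ^ θ * v y ≤ 2 * c / β := by
        have h1 : v' y ^ (-θ) = (v' y ^ θ)⁻¹ := Real.rpow_neg hp0.le θ
        rw [h1] at hkey
        have h2 : v' y ^ θ * ((β / 2) * v y) ≤ v' y ^ θ * (c * (v' y ^ θ)⁻¹) :=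
          mul_le_mul_of_nonneg_left hkey hpθ.le
        have h3 : v' y ^ θ * (c * (v' y ^ θ)⁻¹) = c := by
          field_simp
        rw [h3] at h2
        have h4 : v' y ^ θ * ((β / 2) * v y) = (β / 2) * (v' y ^ θ * v y) := by ring
        rw [h4] at h2
        rw [le_div_iff₀ hβ]
        linarith
      have e2 : v' y * v y ^ (1 / θ) = (v' y ^ θ * v y) ^ (1 / θ) := by
        rw [Real.mul_rpow (Real.rpow_nonneg hp0.le θ) hvy0, ← Real.rpow_mul hp0.le,
          mul_one_div, div_self hθ0.ne', Real.rpow_one]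
      rw [e2, hKdef]
      exact Real.rpow_le_rpow (mul_nonneg (Real.rpow_nonneg hp0.le θ) hvy0) hstep
        (one_div_pos.mpr hθ0).le
  -- linear growth of v^q beyond x₁
  set x₁ := x₀ + 1 with hx₁def
  have hx₁pos : (0 : ℝ) < x₁ := by linarith
  clear_value x₁
  set A := v x₁ ^ q with hAdef
  have hA0 : 0 ≤ A := Real.rpow_nonneg (hvnonneg x₁ hx₁pos) _
  clear_value A
  set B := q * K with hBdef
  have hB0 : 0 < B := mul_pos hq0 hK0
  clear_value B
  have hgderiv : ∀ y : ℝ, 0 < y →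
      HasDerivAt (fun z => B * z - v z ^ q) (B - v' y * q * v y ^ (q - 1)) y := by
    intro y hy0
    have h1 : HasDerivAt (fun z : ℝ => B * z) B y := by
      simpa using (hasDerivAt_id y).const_mul B
    exact h1.sub ((hv'deriv y hy0).rpow_const (Or.inr hq1))
  have hgmono : MonotoneOn (fun y => B * y - v y ^ q) (Ici x₁) := by
    apply monotoneOn_of_deriv_nonneg (convex_Ici x₁)
    · intro y hy
      have hy0 : 0 < y := lt_of_lt_of_le hx₁pos hy
      exact (hgderiv y hy0).continuousAt.continuousWithinAt
    · intro y hy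
      rw [interior_Ici] at hy
      have hy0 : 0 < y := lt_trans hx₁pos hy
      exact (hgderiv y hy0).differentiableAt.differentiableWithinAt
    · intro y hy
      rw [interior_Ici] at hy
      have hy0 : 0 < y := lt_trans hx₁pos hy
      rw [(hgderiv y hy0).deriv]
      have hy' : x₁ < y := hy
      rw [hx₁def] at hy'
      have hmy := hmain y (by linarith)
      rw [hqθ]
      have h2 := mul_le_mul_of_nonneg_left hmy hq0.le
      have h3 : v' y * q * v y ^ (1 / θ) = q * (v' y * v y ^ (1 / θ)) := by ring
      rw [h3]
      rw [hBdef]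
      linarith
  -- conclusion
  have hCpos : (0 : ℝ) < v x₁ + (A + B) ^ (1 - γ) + 1 := by
    have := hvnonneg x₁ hx₁pos
    have := Real.rpow_pos_of_pos (by linarith : (0:ℝ) < A + B) (1 - γ)
    linarith
  refine ⟨v x₁ + (A + B) ^ (1 - γ) + 1, hCpos, ?_⟩
  intro x hx
  have hxp : (0 : ℝ) ≤ x ^ (1 - γ) := Real.rpow_nonneg hx.le _
  have hABp : (0 : ℝ) < (A + B) ^ (1 - γ) :=
    Real.rpow_pos_of_pos (by linarith) _
  by_cases hxx : x ≤ x₁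
  · have hvle : v x ≤ v x₁ := by
      rcases eq_or_lt_of_le hxx with rfl | hlt
      · exact le_rfl
      · exact (hmono (mem_Ioi.mpr hx) (mem_Ioi.mpr hx₁pos) hlt).le
    nlinarith [mul_nonneg hCpos.le hxp, hvnonneg x₁ hx₁pos]
  · push_neg at hxx
    have hx1x : (1 : ℝ) ≤ x := by linarith
    have hg := hgmono (self_mem_Ici) (mem_Ici.mpr hxx.le) hxx.le
    simp only at hg
    have hBx₁ : 0 ≤ B * x₁ := mul_nonneg hB0.le hx₁pos.le
    have h4 : v x ^ q ≤ A + B * x := by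
      rw [hAdef]
      linarith
    have h5' : A * 1 ≤ A * x := mul_le_mul_of_nonneg_left hx1x hA0
    have h5 : A + B * x ≤ (A + B) * x := by linarith
    have h6 : v x ^ q ≤ (A + B) * x := le_trans h4 h5
    have hvx0 : 0 ≤ v x := hvnonneg x hx
    have h7 : (v x ^ q) ^ (1 - γ) ≤ ((A + B) * x) ^ (1 - γ) :=
      Real.rpow_le_rpow (Real.rpow_nonneg hvx0 _) h6 h1γ.le
    have hq1γ : q * (1 - γ) = 1 := by
      rw [hqdef]; field_simp
    have h8 : (v x ^ q) ^ (1 - γ) = v x := by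
      rw [← Real.rpow_mul hvx0, hq1γ, Real.rpow_one]
    have h9 : ((A + B) * x) ^ (1 - γ) = (A + B) ^ (1 - γ) * x ^ (1 - γ) :=
      Real.mul_rpow (by linarith) hx.le
    rw [h8, h9] at h7
    have h10 : (A + B) ^ (1 - γ) * x ^ (1 - γ) ≤
        (v x₁ + (A + B) ^ (1 - γ) + 1) * x ^ (1 - γ) := by
      apply mul_le_mul_of_nonneg_right _ hxp
      have := hvnonneg x₁ hx₁pos
      linarith
    linarith [h7, h10, hABp, hvnonneg x₁ hx₁pos]
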